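/- Let E be a real inner product space, n ≥ 1, k ≥ 1, let x : Fin n → E and y : Fin n → ℝ, and let R, b, w ≥ 0 satisfy ‖x_i‖ ≤ R and |y_i| ≤ b for all i. Let B₁, …, B_k be pairwise disjoint finite subsets of Fin n whose union is Fin n, and let θ₁, …, θ_k and θ'₁, …, θ'_k in E satisfy ‖θ_j‖ ≤ w and ‖θ'_j‖ ≤ w for all j. Then (1/n) Σ_{i=1}^{n} min_{j ∈ {1,…,k}} (y_i − ⟨θ'_j, x_i⟩)² ≤ (1/n) Σ_{j=1}^{k} Σ_{i ∈ B_j} (y_i − ⟨θ_j, x_i⟩)² + (2(wR + b)/n) Σ_{j=1}^{k} √( |B_j| · Σ_{i ∈ B_j} ⟨θ'_j − θ_j, x_i⟩² ). -/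
import Mathlib


open scoped RealInnerProductSpace

lemma cs_sum_abs {ι : Type*} (S : Finset ι) (v : ι → ℝ) :
    ∑ i ∈ S, |v i| ≤ Real.sqrt (S.card * ∑ i ∈ S, v i ^ 2) := by
  have h2 : (∑ i ∈ S, |v i|) ^ 2 ≤ S.card * ∑ i ∈ S, v i ^ 2 := by
    have h := Finset.sum_mul_sq_le_sq_mul_sq S (fun _ => (1 : ℝ)) (fun i => |v i|)
    simp only [one_mul, one_pow, sq_abs, Finset.sum_const, nsmul_eq_mul, mul_one] at h
    exact h
  have hnn : 0 ≤ ∑ i ∈ S, |v i| := Finset.sum_nonneg fun i _ => abs_nonneg _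
  exact (Real.le_sqrt hnn (by positivity)).mpr h2

/-- Deterministic backbone of the sub-sampling approximation guarantee: the min-loss of
the parameters `θ'` is bounded by the partition-based least-squares loss of the reference
parameters `θ` plus the `Σ_{B_j}`-norm discrepancies. -/
theorem stmt_12 {E : Type*} [NormedAddCommGroup E] [InnerProductSpace ℝ E]
    (n k : ℕ) (hn : 1 ≤ n) (hk : 1 ≤ k)
    (x : Fin n → E) (y : Fin n → ℝ)
    (R b w : ℝ) (hR : 0 ≤ R) (hb : 0 ≤ b) (hw : 0 ≤ w)
    (hx : ∀ i, ‖x i‖ ≤ R) (hy : ∀ i, |y i| ≤ b)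
    (B : Fin k → Finset (Fin n))
    (hdisj : ∀ j j' : Fin k, j ≠ j' → Disjoint (B j) (B j'))
    (hcover : ∀ i : Fin n, ∃ j : Fin k, i ∈ B j)
    (θ θ' : Fin k → E) (hθ : ∀ j, ‖θ j‖ ≤ w) (hθ' : ∀ j, ‖θ' j‖ ≤ w) :
    (1 / n : ℝ) *
        ∑ i, Finset.univ.inf' ⟨⟨0, hk⟩, Finset.mem_univ _⟩
          (fun j => (y i - ⟪θ' j, x i⟫) ^ 2) ≤
      (1 / n : ℝ) * ∑ j, ∑ i ∈ B j, (y i - ⟪θ j, x i⟫) ^ 2 +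
        (2 * (w * R + b) / n) *
          ∑ j, Real.sqrt ((B j).card * ∑ i ∈ B j, ⟪θ' j - θ j, x i⟫ ^ 2) := by
  set g : Fin n → ℝ := fun i => Finset.univ.inf' ⟨⟨0, hk⟩, Finset.mem_univ _⟩
      (fun j => (y i - ⟪θ' j, x i⟫) ^ 2) with hg
  have hninv : (0:ℝ) ≤ 1 / n := by positivity
  -- Step 1: decompose the sum over the partition
  have huniv : (Finset.univ : Finset (Fin n)) = Finset.univ.biUnion B := by
    ext i
    simp only [Finset.mem_univ, Finset.mem_biUnion, true_iff]
    obtain ⟨j, hj⟩ := hcover i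
    exact ⟨j, trivial, hj⟩
  have hstep1 : ∑ i, g i = ∑ j, ∑ i ∈ B j, g i := by
    rw [huniv, Finset.sum_biUnion]
    intro j _ j' _ hjj'
    exact hdisj j j' hjj'
  -- Step 2: per-block bound of min by value at j
  have hstep2 : ∀ j, ∀ i ∈ B j, g i ≤ (y i - ⟪θ' j, x i⟫) ^ 2 := by
    intro j i _
    exact Finset.inf'_le _ (Finset.mem_univ j)
  -- Step 3: per-block comparison with θ j
  have hstep3 : ∀ j : Fin k,
      ∑ i ∈ B j, (y i - ⟪θ' j, x i⟫) ^ 2 ≤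
        ∑ i ∈ B j, (y i - ⟪θ j, x i⟫) ^ 2 +
          2 * (w * R + b) * Real.sqrt ((B j).card * ∑ i ∈ B j, ⟪θ' j - θ j, x i⟫ ^ 2) := by
    intro j
    have hpt : ∀ i ∈ B j,
        (y i - ⟪θ' j, x i⟫) ^ 2 - (y i - ⟪θ j, x i⟫) ^ 2 ≤
          2 * (w * R + b) * |⟪θ' j - θ j, x i⟫| := by
      intro i _
      have hfac : (y i - ⟪θ' j, x i⟫) ^ 2 - (y i - ⟪θ j, x i⟫) ^ 2 =
          ((y i - ⟪θ' j, x i⟫) + (y i - ⟪θ j, x i⟫)) * (⟪θ j, x i⟫ - ⟪θ' j, x i⟫) := by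
        ring
      have hinθ : |⟪θ j, x i⟫| ≤ w * R := by
        calc |⟪θ j, x i⟫| ≤ ‖θ j‖ * ‖x i‖ := abs_real_inner_le_norm _ _
          _ ≤ w * R := mul_le_mul (hθ j) (hx i) (norm_nonneg _) hw
      have hinθ' : |⟪θ' j, x i⟫| ≤ w * R := by
        calc |⟪θ' j, x i⟫| ≤ ‖θ' j‖ * ‖x i‖ := abs_real_inner_le_norm _ _
          _ ≤ w * R := mul_le_mul (hθ' j) (hx i) (norm_nonneg _) hw
      have hsum : |(y i - ⟪θ' j, x i⟫) + (y i - ⟪θ j, x i⟫)| ≤ 2 * (w * R + b) := by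
        have := hy i
        calc |(y i - ⟪θ' j, x i⟫) + (y i - ⟪θ j, x i⟫)|
            ≤ |y i - ⟪θ' j, x i⟫| + |y i - ⟪θ j, x i⟫| := abs_add_le _ _
          _ ≤ (|y i| + |⟪θ' j, x i⟫|) + (|y i| + |⟪θ j, x i⟫|) := by
              gcongr <;> exact abs_sub _ _
          _ ≤ (b + w * R) + (b + w * R) := by gcongr
          _ = 2 * (w * R + b) := by ring
      have hdiff : |⟪θ j, x i⟫ - ⟪θ' j, x i⟫| = |⟪θ' j - θ j, x i⟫| := by
        rw [inner_sub_left]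
        rw [abs_sub_comm]
      calc (y i - ⟪θ' j, x i⟫) ^ 2 - (y i - ⟪θ j, x i⟫) ^ 2
          = ((y i - ⟪θ' j, x i⟫) + (y i - ⟪θ j, x i⟫)) * (⟪θ j, x i⟫ - ⟪θ' j, x i⟫) := hfac
        _ ≤ |((y i - ⟪θ' j, x i⟫) + (y i - ⟪θ j, x i⟫)) * (⟪θ j, x i⟫ - ⟪θ' j, x i⟫)| :=
            le_abs_self _
        _ = |(y i - ⟪θ' j, x i⟫) + (y i - ⟪θ j, x i⟫)| * |⟪θ' j - θ j, x i⟫| := by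
            rw [abs_mul, hdiff]
        _ ≤ 2 * (w * R + b) * |⟪θ' j - θ j, x i⟫| := by
            gcongr
    have hsum' : ∑ i ∈ B j, ((y i - ⟪θ' j, x i⟫) ^ 2 - (y i - ⟪θ j, x i⟫) ^ 2) ≤
        2 * (w * R + b) * ∑ i ∈ B j, |⟪θ' j - θ j, x i⟫| := by
      rw [Finset.mul_sum]
      exact Finset.sum_le_sum hpt
    have hcs := cs_sum_abs (B j) (fun i => ⟪θ' j - θ j, x i⟫)
    have h2 : ∑ i ∈ B j, ((y i - ⟪θ' j, x i⟫) ^ 2 - (y i - ⟪θ j, x i⟫) ^ 2) ≤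
        2 * (w * R + b) * Real.sqrt ((B j).card * ∑ i ∈ B j, ⟪θ' j - θ j, x i⟫ ^ 2) := by
      refine hsum'.trans ?_
      gcongr
    rw [Finset.sum_sub_distrib] at h2
    linarith
  -- Combine
  have hmain : ∑ i, g i ≤
      ∑ j, ∑ i ∈ B j, (y i - ⟪θ j, x i⟫) ^ 2 +
        2 * (w * R + b) * ∑ j, Real.sqrt ((B j).card * ∑ i ∈ B j, ⟪θ' j - θ j, x i⟫ ^ 2) := by
    rw [hstep1, Finset.mul_sum, ← Finset.sum_add_distrib]
    refine Finset.sum_le_sum fun j _ => ?_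
    exact (Finset.sum_le_sum (hstep2 j)).trans (hstep3 j)
  have := mul_le_mul_of_nonneg_left hmain hninv
  calc (1 / n : ℝ) * ∑ i, g i
      ≤ (1 / n : ℝ) * (∑ j, ∑ i ∈ B j, (y i - ⟪θ j, x i⟫) ^ 2 +
        2 * (w * R + b) * ∑ j, Real.sqrt ((B j).card * ∑ i ∈ B j, ⟪θ' j - θ j, x i⟫ ^ 2)) :=
        this
    _ = (1 / n : ℝ) * ∑ j, ∑ i ∈ B j, (y i - ⟪θ j, x i⟫) ^ 2 +
        (2 * (w * R + b) / n) *
          ∑ j, Real.sqrt ((B j).card * ∑ i ∈ B j, ⟪θ' j - θ j, x i⟫ ^ 2) := by ring
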